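/- Along any gradient flow Θ(s) of the total PINN loss L, the concatenated residual vector V(s) = (r_1(Θ(s)),…,r_{N_r}(Θ(s)), b_1(Θ(s)),…,b_{N_b}(Θ(s)), z_1(Θ(s)),…,z_{N_z}(Θ(s))) satisfies the linear evolution dV/ds = −K(s) V(s), where K(s) is the (N_r+N_b+N_z)×(N_r+N_b+N_z) matrix whose entry in row indexed by residual ρ_i from group c and column indexed by residual ρ'_j from group c' equals (2λ_{c'}/N_{c'}) · ⟨∇ρ_i(Θ(s)), ∇ρ'_j(Θ(s))⟩. -/

import Mathlib

open scoped RealInnerProductSpace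

private lemma hasFDerivAt_sq {E : Type*} [NormedAddCommGroup E] [NormedSpace ℝ E]
    {f : E → ℝ} {f' : E →L[ℝ] ℝ} {x : E} (hf : HasFDerivAt f f' x) :
    HasFDerivAt (fun y => f y ^ 2) ((2 * f x) • f') x := by
  have h := hf.fun_mul hf
  have : (2 * f x) • f' = f x • f' + f x • f' := by
    rw [two_mul, add_smul]
  rw [this]
  simpa [pow_two] using h

/-- Along any gradient flow `Θ(s)` of the total PINN loss
`L = (λr/Nr) ∑ rᵢ² + (λb/Nb) ∑ bᵢ² + (λz/Nz) ∑ zᵢ²`, the concatenated residual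
vector `V(s) = (r, b, z)(Θ(s))` satisfies `dV/ds = -K(s) V(s)`, where the entry
of `K(s)` in row `i` (from group `c`) and column `j` (from group `c'`) is
`(2 λ_{c'}/N_{c'}) ⟪∇ρᵢ(Θ(s)), ∇ρ'ⱼ(Θ(s))⟫`. -/
theorem pinn_residual_vector_ntk_dynamics
    (p Nr Nb Nz : ℕ)
    (r : Fin Nr → EuclideanSpace ℝ (Fin p) → ℝ)
    (b : Fin Nb → EuclideanSpace ℝ (Fin p) → ℝ)
    (z : Fin Nz → EuclideanSpace ℝ (Fin p) → ℝ)
    (hr : ∀ i, ContDiff ℝ 1 (r i)) (hb : ∀ i, ContDiff ℝ 1 (b i))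
    (hz : ∀ i, ContDiff ℝ 1 (z i))
    (lr lb lz : ℝ) (hlr : 0 < lr) (hlb : 0 < lb) (hlz : 0 < lz)
    (L : EuclideanSpace ℝ (Fin p) → ℝ)
    (hL : L = fun Θ => lr / (Nr : ℝ) * ∑ i, (r i Θ) ^ 2
        + lb / (Nb : ℝ) * ∑ i, (b i Θ) ^ 2 + lz / (Nz : ℝ) * ∑ i, (z i Θ) ^ 2)
    (Θ : ℝ → EuclideanSpace ℝ (Fin p))
    (hΘ : ∀ s : ℝ, HasDerivAt Θ (-gradient L (Θ s)) s)
    -- the concatenated residual functions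
    (ρ : (Fin Nr ⊕ Fin Nb ⊕ Fin Nz) → EuclideanSpace ℝ (Fin p) → ℝ)
    (hρ : ρ = Sum.elim r (Sum.elim b z))
    -- the group coefficients `λ_c / N_c`
    (c : (Fin Nr ⊕ Fin Nb ⊕ Fin Nz) → ℝ)
    (hc : c = Sum.elim (fun _ => lr / (Nr : ℝ))
        (Sum.elim (fun _ => lb / (Nb : ℝ)) (fun _ => lz / (Nz : ℝ))))
    -- the neural tangent kernel matrix
    (K : ℝ → Matrix (Fin Nr ⊕ Fin Nb ⊕ Fin Nz) (Fin Nr ⊕ Fin Nb ⊕ Fin Nz) ℝ)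
    (hK : ∀ s i j, K s i j = 2 * c j * ⟪gradient (ρ i) (Θ s), gradient (ρ j) (Θ s)⟫)
    (i : Fin Nr ⊕ Fin Nb ⊕ Fin Nz) (s : ℝ) :
    HasDerivAt (fun t => ρ i (Θ t)) (-∑ j, K s i j * ρ j (Θ s)) s := by
  set x := Θ s with hx
  -- differentiability of each residual
  have hρdiff : ∀ j, ∀ y, HasFDerivAt (ρ j) (fderiv ℝ (ρ j) y) y := by
    intro j y
    rcases j with j | j | j
    · simp only [hρ, Sum.elim_inl]
      exact (((hr j).differentiable one_ne_zero) y).hasFDerivAt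
    · simp only [hρ, Sum.elim_inr, Sum.elim_inl]
      exact (((hb j).differentiable one_ne_zero) y).hasFDerivAt
    · simp only [hρ, Sum.elim_inr]
      exact (((hz j).differentiable one_ne_zero) y).hasFDerivAt
  -- each fderiv is the dual of the gradient
  have hdual : ∀ j y, fderiv ℝ (ρ j) y
      = InnerProductSpace.toDual ℝ _ (gradient (ρ j) y) := by
    intro j y
    have h1 : HasGradientAt (ρ j) (gradient (ρ j) y) y :=
      (hρdiff j y).differentiableAt.hasGradientAt
    exact (hρdiff j y).unique h1.hasFDerivAt
  -- the gradient of L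
  set G : EuclideanSpace ℝ (Fin p) :=
    ∑ j, (2 * c j * ρ j x) • gradient (ρ j) x with hG
  have hLfd : HasFDerivAt L (InnerProductSpace.toDual ℝ _ G) x := by
    have hmap : (InnerProductSpace.toDual ℝ (EuclideanSpace ℝ (Fin p))) G
        = ∑ j, (2 * c j * ρ j x) • fderiv ℝ (ρ j) x := by
      rw [hG, map_sum]
      refine Finset.sum_congr rfl fun j _ => ?_
      rw [map_smul, hdual]
    rw [hmap, hL]
    have hRg : HasFDerivAt (fun Θ => lr / (Nr : ℝ) * ∑ i, (r i Θ) ^ 2)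
        (∑ i, ((lr / (Nr : ℝ)) • ((2 * r i x) • fderiv ℝ (r i) x))) x := by
      have := (HasFDerivAt.fun_sum (u := Finset.univ) (fun i _ =>
        hasFDerivAt_sq (hρdiff (Sum.inl i) x))).const_mul (lr / (Nr : ℝ))
      simpa [hρ, Finset.smul_sum] using this
    have hBg : HasFDerivAt (fun Θ => lb / (Nb : ℝ) * ∑ i, (b i Θ) ^ 2)
        (∑ i, ((lb / (Nb : ℝ)) • ((2 * b i x) • fderiv ℝ (b i) x))) x := by
      have := (HasFDerivAt.fun_sum (u := Finset.univ) (fun i _ =>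
        hasFDerivAt_sq (hρdiff (Sum.inr (Sum.inl i)) x))).const_mul (lb / (Nb : ℝ))
      simpa [hρ, Finset.smul_sum] using this
    have hZg : HasFDerivAt (fun Θ => lz / (Nz : ℝ) * ∑ i, (z i Θ) ^ 2)
        (∑ i, ((lz / (Nz : ℝ)) • ((2 * z i x) • fderiv ℝ (z i) x))) x := by
      have := (HasFDerivAt.fun_sum (u := Finset.univ) (fun i _ =>
        hasFDerivAt_sq (hρdiff (Sum.inr (Sum.inr i)) x))).const_mul (lz / (Nz : ℝ))
      simpa [hρ, Finset.smul_sum] using this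
    have htot := (hRg.add hBg).add hZg
    refine htot.congr_fderiv (Eq.symm ?_)
    rw [Fintype.sum_sum_type, Fintype.sum_sum_type, ← add_assoc]
    congr 1
    · congr 1
      · refine Finset.sum_congr rfl fun j _ => ?_
        simp only [hρ, hc, Sum.elim_inl, smul_smul]
        congr 1; ring
      · refine Finset.sum_congr rfl fun j _ => ?_
        simp only [hρ, hc, Sum.elim_inr, Sum.elim_inl, smul_smul]
        congr 1; ring
    · refine Finset.sum_congr rfl fun j _ => ?_
      simp only [hρ, hc, Sum.elim_inr, smul_smul]
      congr 1; ring
  have hgradL : gradient L x = G := by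
    have : HasGradientAt L G x := by
      rw [hasGradientAt_iff_hasFDerivAt]; exact hLfd
    exact this.gradient
  -- chain rule
  have hchain : HasDerivAt (fun t => ρ i (Θ t))
      ((fderiv ℝ (ρ i) x) (-gradient L (Θ s))) s :=
    (hρdiff i x).comp_hasDerivAt s (hΘ s)
  convert hchain using 1
  rw [hdual, ← hx, hgradL, map_neg, InnerProductSpace.toDual_apply_apply, hG,
    inner_sum, neg_inj]
  refine Finset.sum_congr rfl fun j _ => ?_
  rw [real_inner_smul_right, hK, ← hx]
  ring
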